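/- Let A be a finite group with normal subgroup G and subgroup U ≤ G, and let N = Core_A(U) be the A-core of U. Writing Ĥ = HN/N for subgroups H ≤ A, we have: Ĝ is normal in Â with |Â : Ĝ| = |A : G|, |Ĝ : Û| = |G : U|, and P_A(G) = P_A(U) if and only if P_Â(Ĝ) = P_Â(Û). -/

import Mathlib

/-- The `A`-prime-power-covering set of a subgroup `H` of `A`. -/
def ppcSet {A : Type*} [Group A] (H : Subgroup A) : Set A :=
  {y | ∃ x ∈ H, (∃ p k : ℕ, p.Prime ∧ orderOf x = p ^ k) ∧ ∃ a : A, a⁻¹ * x * a = y}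

lemma ppcSet_mono {A : Type*} [Group A] {H K : Subgroup A} (h : H ≤ K) :
    ppcSet H ⊆ ppcSet K := by
  rintro y ⟨x, hx, ho, a, ha⟩
  exact ⟨x, h hx, ho, a, ha⟩

theorem stmt6 {A : Type*} [Group A] [Finite A] (G U : Subgroup A)
    (hG : G.Normal) (hUG : U ≤ G) :
    (Subgroup.map (QuotientGroup.mk' U.normalCore) G).Normal ∧
    (Subgroup.map (QuotientGroup.mk' U.normalCore) G).index = G.index ∧
    (Subgroup.map (QuotientGroup.mk' U.normalCore) U).relIndex
      (Subgroup.map (QuotientGroup.mk' U.normalCore) G) = U.relIndex G ∧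
    (ppcSet G = ppcSet U ↔
      ppcSet (Subgroup.map (QuotientGroup.mk' U.normalCore) G)
        = ppcSet (Subgroup.map (QuotientGroup.mk' U.normalCore) U)) := by
  have hNU : U.normalCore ≤ U := Subgroup.normalCore_le U
  have hNG : U.normalCore ≤ G := hNU.trans hUG
  set π := QuotientGroup.mk' U.normalCore with hπdef
  have hπ : Function.Surjective π := QuotientGroup.mk'_surjective U.normalCore
  have hker : π.ker = U.normalCore := QuotientGroup.ker_mk' U.normalCore
  have hidx : ∀ H : Subgroup A, U.normalCore ≤ H → (Subgroup.map π H).index = H.index := by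
    intro H hH
    rw [Subgroup.index_map, hker, sup_eq_left.mpr hH,
      MonoidHom.range_eq_top_of_surjective _ hπ, Subgroup.index_top, mul_one]
  refine ⟨hG.map π hπ, hidx G hNG, ?_, ?_⟩
  · have h1 := Subgroup.relIndex_mul_index
      (Subgroup.map_mono hUG : Subgroup.map π U ≤ Subgroup.map π G)
    have h2 := Subgroup.relIndex_mul_index hUG
    rw [hidx G hNG, hidx U hNU] at h1
    exact Nat.eq_of_mul_eq_mul_right
      (Nat.pos_of_ne_zero Subgroup.index_ne_zero_of_finite) (h1.trans h2.symm)
  constructor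
  · -- forward direction
    intro hGU
    refine Set.Subset.antisymm ?_ (ppcSet_mono (Subgroup.map_mono hUG))
    rintro yq ⟨xq, hxqG, ⟨p, k, hp, hord⟩, aq, hconj⟩
    obtain ⟨x, hxG, rfl⟩ := Subgroup.mem_map.mp hxqG
    have hn : orderOf x ≠ 0 := (orderOf_pos x).ne'
    set n := orderOf x with hndef
    set m := ordCompl[p] n with hmdef
    have hmdvd : m ∣ n := Nat.ordCompl_dvd n p
    have hmpos : 0 < m := Nat.ordCompl_pos p hn
    have hordm : orderOf (x ^ m) = p ^ n.factorization p := by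
      rw [orderOf_pow, ← hndef, Nat.gcd_eq_right hmdvd]
      exact Nat.div_eq_of_eq_mul_left hmpos (Nat.ordProj_mul_ordCompl_eq_self n p).symm
    have hxm : x ^ m ∈ ppcSet U := by
      rw [← hGU]
      exact ⟨x ^ m, pow_mem hxG m, ⟨p, n.factorization p, hp, hordm⟩, 1, by group⟩
    obtain ⟨u, huU, ⟨q, j, hq, hou⟩, b, hb⟩ := hxm
    -- coprimality and Euler
    have hcop : Nat.Coprime m (p ^ k) :=
      ((Nat.coprime_ordCompl hp hn).pow_left k).symm
    have hφpos : 0 < (p ^ k).totient := Nat.totient_pos.mpr (pow_pos hp.pos k)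
    have heuler : m ^ (p ^ k).totient ≡ 1 [MOD p ^ k] := Nat.ModEq.pow_totient hcop
    set e := m ^ ((p ^ k).totient - 1) with hedef
    have hme : m * e = m ^ (p ^ k).totient := by
      rw [hedef, ← pow_succ']
      congr 1
      omega
    have hkey : (π x ^ m) ^ e = π x := by
      rw [← pow_mul, hme]
      conv_rhs => rw [← pow_one (π x)]
      rw [pow_eq_pow_iff_modEq, hord]
      exact heuler
    have hπxm : π x ^ m = (π b)⁻¹ * π u * π b := by
      rw [← map_pow, ← hb]
      simp [map_mul]
    refine ⟨(π u) ^ e, pow_mem (Subgroup.mem_map_of_mem π huU) e,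
      ⟨q, ?_⟩, π b * aq, ?_⟩
    · have hdvd : orderOf ((π u) ^ e) ∣ q ^ j := by
        calc orderOf ((π u) ^ e) ∣ orderOf (π u) := orderOf_pow_dvd e
        _ ∣ orderOf u := orderOf_map_dvd π u
        _ = q ^ j := hou
      obtain ⟨i, _, hi⟩ := (Nat.dvd_prime_pow hq).mp hdvd
      exact ⟨i, hq, hi⟩
    · have : (π b)⁻¹ * (π u) ^ e * (π b) = π x := by
        have := conj_pow (i := e) (a := (π b)⁻¹) (b := π u)
        rw [inv_inv] at this
        rw [← this, ← hπxm, hkey]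
      rw [← hconj, ← this]
      group
  · -- backward direction
    intro hQ
    refine Set.Subset.antisymm ?_ (ppcSet_mono hUG)
    rintro y ⟨x, hxG, ⟨p, k, hp, hord⟩, a, hconj⟩
    have hπx : π x ∈ ppcSet (Subgroup.map π G) := by
      refine ⟨π x, Subgroup.mem_map_of_mem π hxG, ⟨p, ?_⟩, 1, by group⟩
      have hdvd : orderOf (π x) ∣ p ^ k := hord ▸ orderOf_map_dvd π x
      obtain ⟨i, _, hi⟩ := (Nat.dvd_prime_pow hp).mp hdvd
      exact ⟨i, hp, hi⟩
    rw [hQ] at hπx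
    obtain ⟨uq, huqU, -, bq, hbq⟩ := hπx
    obtain ⟨u, huU, rfl⟩ := Subgroup.mem_map.mp huqU
    obtain ⟨b, rfl⟩ := hπ bq
    have hn0 : x⁻¹ * (b⁻¹ * u * b) ∈ U.normalCore := by
      rw [← hker, MonoidHom.mem_ker]
      have : π (b⁻¹ * u * b) = π x := by simpa [map_mul] using hbq
      simp [map_mul, this]
    have hv : b * x * b⁻¹ ∈ U := by
      have hvu : b * x * b⁻¹ = u * (b * (x⁻¹ * (b⁻¹ * u * b))⁻¹ * b⁻¹) := by group
      rw [hvu]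
      exact mul_mem huU (hNU (U.normalCore_normal.conj_mem _ (inv_mem hn0) b))
    refine ⟨b * x * b⁻¹, hv, ⟨p, k, hp, ?_⟩, b * a, by rw [← hconj]; group⟩
    have hsc : SemiconjBy b x (b * x * b⁻¹) := by
      unfold SemiconjBy
      group
    rw [← SemiconjBy.orderOf_eq _ hsc, hord]
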